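/- Let any (3; N_1, N_2, K_d, K) exact-repair MLD-R code (n = 3 nodes, d = 2 messages) be given. Then log K ≥ (1/2)·log N_1 + (1/3)·log N_2. -/

import Mathlib

/-- An `(n; N₁, …, N_{n-1}, K_d, K)` exact-repair MLD-R code with `n` storage nodes and
`d = n - 1` independent messages, where message `k` (0-indexed) takes values in
`Fin (N k)`, each node stores an element of `Fin Kd`, and each repair message is an
element of `Fin K`. -/
structure MLDRCode (n : ℕ) (N : Fin (n - 1) → ℕ) (Kd K : ℕ) where
  /-- node encoders: node `i` stores `enc i m` -/
  enc : Fin n → ((k : Fin (n - 1)) → Fin (N k)) → Fin Kd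
  /-- decoders: from the contents stored on the nodes in `A`, produce messages
  (only the first `|A|` of them are required to be correct) -/
  dec : (A : Finset (Fin n)) → ((i : A) → Fin Kd) → ((k : Fin (n - 1)) → Fin (N k))
  /-- repair encoders: helper node `i` sends `repEnc i j w` to the failed node `j`,
  where `w` is the content stored on node `i` -/
  repEnc : Fin n → Fin n → Fin Kd → Fin K
  /-- repair decoders: the failed node `j` regenerates its content from the repair
  messages sent by the other `n - 1` nodes -/
  repDec : (j : Fin n) → ((i : {i : Fin n // i ≠ j}) → Fin K) → Fin Kd
  /-- reconstruction condition: any nonempty set `A` of at most `n - 1` nodes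
  recovers the first `|A|` messages -/
  reconstruct : ∀ (A : Finset (Fin n)), A.Nonempty → A.card ≤ n - 1 →
    ∀ m : (k : Fin (n - 1)) → Fin (N k), ∀ k : Fin (n - 1), (k : ℕ) < A.card →
      dec A (fun i => enc i.1 m) k = m k
  /-- exact repair condition -/
  repair : ∀ (j : Fin n), ∀ m : (k : Fin (n - 1)) → Fin (N k),
      repDec j (fun i => repEnc i.1 j (enc i.1 m)) = enc j m


namespace MLDRAux

open Finset

set_option linter.unusedSectionVars false

variable {Ω : Type*} [Fintype Ω] {α β γ : Type*} [DecidableEq α] [DecidableEq β] [DecidableEq γ]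

/-- The fiber of `g` through `ω`. -/
def fib (g : Ω → α) (ω : Ω) : Finset Ω := Finset.univ.filter (fun ω' => g ω' = g ω)

/-- Unnormalized "negative entropy" count: sum of logs of fiber sizes. -/
noncomputable def Sc (g : Ω → α) : ℝ := ∑ ω : Ω, Real.log ((fib g ω).card)

lemma mem_fib (g : Ω → α) (ω : Ω) : ω ∈ fib g ω := by simp [fib]

lemma fib_card_pos (g : Ω → α) (ω : Ω) : 0 < (fib g ω).card :=
  Finset.card_pos.2 ⟨ω, mem_fib g ω⟩

lemma fib_subset_fib {g : Ω → α} {u : Ω → β}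
    (h : ∀ ω₁ ω₂, g ω₁ = g ω₂ → u ω₁ = u ω₂) (ω : Ω) : fib g ω ⊆ fib u ω := by
  intro ω' hω'
  simp only [fib, Finset.mem_filter, Finset.mem_univ, true_and] at *
  exact h _ _ hω'

lemma Sc_mono {g : Ω → α} {u : Ω → β}
    (h : ∀ ω₁ ω₂, g ω₁ = g ω₂ → u ω₁ = u ω₂) : Sc g ≤ Sc u := by
  apply Finset.sum_le_sum
  intro ω _
  have h1 : (0:ℝ) < (fib g ω).card := by exact_mod_cast fib_card_pos g ω
  have h2 : ((fib g ω).card : ℝ) ≤ (fib u ω).card := by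
    exact_mod_cast Finset.card_le_card (fib_subset_fib h ω)
  exact Real.log_le_log h1 h2

lemma Sc_eq_zero {g : Ω → α} (h : ∀ ω₁ ω₂, g ω₁ = g ω₂ → ω₁ = ω₂) : Sc g = 0 := by
  apply Finset.sum_eq_zero
  intro ω _
  have : fib g ω = {ω} := by
    ext ω'
    simp only [fib, Finset.mem_filter, Finset.mem_univ, true_and, Finset.mem_singleton]
    exact ⟨fun hh => h _ _ hh, fun hh => by rw [hh]⟩
  rw [this]
  simp

lemma Sc_le_card_mul_log [Fintype γ] {g : Ω → α} (f : Ω → γ)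
    (h : ∀ ω₁ ω₂, g ω₁ = g ω₂ → f ω₁ = f ω₂ → ω₁ = ω₂) :
    Sc g ≤ (Fintype.card Ω : ℝ) * Real.log (Fintype.card γ) := by
  have hcard : ∀ ω, (fib g ω).card ≤ Fintype.card γ := by
    intro ω
    rw [← Finset.card_univ (α := γ)]
    apply Finset.card_le_card_of_injOn f (fun _ _ => Finset.mem_univ _)
    intro a ha b hb hfab
    simp only [fib, Finset.mem_coe, Finset.mem_filter, Finset.mem_univ, true_and] at ha hb
    exact h a b (ha.trans hb.symm) hfab
  calc Sc g ≤ ∑ _ω : Ω, Real.log (Fintype.card γ) := by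
        apply Finset.sum_le_sum
        intro ω _
        have h1 : (0:ℝ) < (fib g ω).card := by exact_mod_cast fib_card_pos g ω
        exact Real.log_le_log h1 (by exact_mod_cast hcard ω)
    _ = (Fintype.card Ω : ℝ) * Real.log (Fintype.card γ) := by
        rw [Finset.sum_const, Finset.card_univ, nsmul_eq_mul]


lemma le_Sc [Nonempty Ω] [Fintype α] (g : Ω → α) :
    (Fintype.card Ω : ℝ) * Real.log (Fintype.card Ω)
      - (Fintype.card Ω : ℝ) * Real.log (Fintype.card α) ≤ Sc g := by
  have hN0 : 0 < Fintype.card Ω := Fintype.card_pos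
  set N : ℝ := (Fintype.card Ω : ℝ) with hN
  have hNpos : (0:ℝ) < N := by rw [hN]; exact_mod_cast hN0
  set t : ℕ := (Finset.univ.image g).card with ht
  have ht1 : 0 < t := Finset.card_pos.2 (Finset.Nonempty.image Finset.univ_nonempty g)
  have htR : t ≤ Fintype.card α := by
    rw [← Finset.card_univ (α := α)]
    exact Finset.card_le_card (Finset.subset_univ _)
  -- sum of reciprocal fiber sizes = number of fibers
  have hsum : ∑ ω : Ω, ((fib g ω).card : ℝ)⁻¹ = t := by
    have hc := Finset.sum_comp (s := (Finset.univ : Finset Ω))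
      (fun b => ((Finset.univ.filter (fun ω' => g ω' = b)).card : ℝ)⁻¹) g
    simp only [fib]
    rw [hc]
    rw [Finset.sum_congr rfl (g := fun _ => (1:ℝ)) ?_]
    · simp [ht]
    · intro b hb
      obtain ⟨ω₀, _, rfl⟩ := Finset.mem_image.1 hb
      have hpos : 0 < (Finset.univ.filter (fun ω' => g ω' = g ω₀)).card :=
        Finset.card_pos.2 ⟨ω₀, by simp⟩
      rw [nsmul_eq_mul]
      field_simp
  -- Jensen
  have jensen : ∑ ω : Ω, N⁻¹ • Real.log (((fib g ω).card : ℝ)⁻¹)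
      ≤ Real.log (∑ ω : Ω, N⁻¹ • (((fib g ω).card : ℝ)⁻¹)) := by
    apply (strictConcaveOn_log_Ioi.concaveOn).le_map_sum
    · intro i _; positivity
    · rw [Finset.sum_const, Finset.card_univ, nsmul_eq_mul]
      field_simp
      exact hN.symm
    · intro i _
      have := fib_card_pos g i
      have : (0:ℝ) < ((fib g i).card : ℝ) := by exact_mod_cast this
      exact Set.mem_Ioi.2 (by positivity)
  have hL : ∑ ω : Ω, N⁻¹ • Real.log (((fib g ω).card : ℝ)⁻¹) = N⁻¹ * (- Sc g) := by
    simp only [smul_eq_mul, ← Finset.mul_sum, Real.log_inv, Sc]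
    rw [Finset.sum_neg_distrib]
  have hR : ∑ ω : Ω, N⁻¹ • (((fib g ω).card : ℝ)⁻¹) = N⁻¹ * t := by
    simp only [smul_eq_mul, ← Finset.mul_sum, hsum]
  rw [hL, hR] at jensen
  have hlogt : Real.log (N⁻¹ * t) = Real.log t - Real.log N := by
    rw [Real.log_mul (by positivity) (by positivity), Real.log_inv]
    ring
  have hlogle : Real.log t ≤ Real.log (Fintype.card α) := by
    apply Real.log_le_log (by exact_mod_cast ht1)
    exact_mod_cast htR
  rw [hlogt] at jensen
  -- N⁻¹ * (-Sc) ≤ log t - log N  →  goal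
  have h2 : -Sc g ≤ N * (Real.log t - Real.log N) := by
    have h := mul_le_mul_of_nonneg_left jensen (le_of_lt hNpos)
    rwa [← mul_assoc, mul_inv_cancel₀ (ne_of_gt hNpos), one_mul] at h
  have h3 : N * (Real.log t - Real.log N) ≤ N * (Real.log (Fintype.card α) - Real.log N) := by
    apply mul_le_mul_of_nonneg_left _ (le_of_lt hNpos)
    linarith
  have := h2.trans h3
  rw [mul_sub] at this
  linarith


set_option maxHeartbeats 1000000 in
lemma Sc_submod [DecidableEq Ω] {A B C : Type*} [DecidableEq A] [DecidableEq B] [DecidableEq C]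
    (X : Ω → A) (Y : Ω → B) (U : Ω → C)
    (hXU : ∀ ω₁ ω₂, X ω₁ = X ω₂ → U ω₁ = U ω₂)
    (hYU : ∀ ω₁ ω₂, Y ω₁ = Y ω₂ → U ω₁ = U ω₂) :
    Sc X + Sc Y ≤ Sc (fun ω => (X ω, Y ω)) + Sc U := by
  set P : Ω → A × B := fun ω => (X ω, Y ω) with hP
  -- the real-valued ratio
  set r : Ω → ℝ := fun ω =>
    (((fib X ω).card : ℝ) * ((fib Y ω).card : ℝ)) /
      (((fib P ω).card : ℝ) * ((fib U ω).card : ℝ)) with hr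
  have hposX : ∀ ω, (0:ℝ) < ((fib X ω).card : ℝ) := fun ω => by
    exact_mod_cast fib_card_pos X ω
  have hposY : ∀ ω, (0:ℝ) < ((fib Y ω).card : ℝ) := fun ω => by
    exact_mod_cast fib_card_pos Y ω
  have hposP : ∀ ω, (0:ℝ) < ((fib P ω).card : ℝ) := fun ω => by
    exact_mod_cast fib_card_pos P ω
  have hposU : ∀ ω, (0:ℝ) < ((fib U ω).card : ℝ) := fun ω => by
    exact_mod_cast fib_card_pos U ω
  have hrpos : ∀ ω, 0 < r ω := fun ω => by
    rw [hr]
    exact div_pos (mul_pos (hposX ω) (hposY ω)) (mul_pos (hposP ω) (hposU ω))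
  have hlog : ∀ ω : Ω, Real.log (r ω) =
      Real.log ((fib X ω).card) + Real.log ((fib Y ω).card)
        - Real.log ((fib P ω).card) - Real.log ((fib U ω).card) := by
    intro ω
    rw [hr]
    rw [Real.log_div (ne_of_gt (mul_pos (hposX ω) (hposY ω)))
      (ne_of_gt (mul_pos (hposP ω) (hposU ω))),
      Real.log_mul (ne_of_gt (hposX ω)) (ne_of_gt (hposY ω)),
      Real.log_mul (ne_of_gt (hposP ω)) (ne_of_gt (hposU ω))]
    ring
  -- main estimate : ∑ ω, log (r ω) ≤ 0
  have main : ∑ ω : Ω, Real.log (r ω) ≤ 0 := by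
    -- group by fibers of U
    rw [← Finset.sum_fiberwise_of_maps_to
      (g := U) (t := Finset.univ.image U)
      (fun ω _ => Finset.mem_image_of_mem U (Finset.mem_univ ω)) (fun ω => Real.log (r ω))]
    apply Finset.sum_nonpos
    intro c hc
    obtain ⟨ω₀, _, rfl⟩ := Finset.mem_image.1 hc
    set F : Finset Ω := Finset.univ.filter (fun ω => U ω = U ω₀) with hF
    have hω₀F : ω₀ ∈ F := by simp [hF]
    have hFne : (0:ℝ) < (F.card : ℝ) := by
      exact_mod_cast Finset.card_pos.2 ⟨ω₀, hω₀F⟩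
    set M : ℝ := (F.card : ℝ) with hM
    -- facts about fibers of members of F
    have hUF : ∀ ω ∈ F, fib U ω = F := by
      intro ω hω
      rw [Finset.mem_filter] at hω
      rw [fib, hF, hω.2]
    have hXF : ∀ ω ∈ F, fib X ω ⊆ F := by
      intro ω hω ω' hω'
      rw [Finset.mem_filter] at hω ⊢
      rw [fib, Finset.mem_filter] at hω'
      exact ⟨hω'.1, (hXU _ _ hω'.2).trans hω.2⟩
    have hYF : ∀ ω ∈ F, fib Y ω ⊆ F := by
      intro ω hω ω' hω'
      rw [Finset.mem_filter] at hω ⊢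
      rw [fib, Finset.mem_filter] at hω'
      exact ⟨hω'.1, (hYU _ _ hω'.2).trans hω.2⟩
    -- hkey : ∑_{ω ∈ F} cX ω * cY ω / cP ω ≤ M^2
    have hkey : ∑ ω ∈ F, (((fib X ω).card : ℝ) * ((fib Y ω).card : ℝ)) / ((fib P ω).card : ℝ)
        ≤ M * M := by
      have hcomp := Finset.sum_comp (s := F)
        (fun p : A × B => ((Finset.univ.filter (fun ω' => X ω' = p.1)).card : ℝ) *
          ((Finset.univ.filter (fun ω' => Y ω' = p.2)).card : ℝ) /
          ((Finset.univ.filter (fun ω' => P ω' = p)).card : ℝ)) P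
      rw [show (∑ ω ∈ F, (((fib X ω).card : ℝ) * ((fib Y ω).card : ℝ)) / ((fib P ω).card : ℝ))
          = ∑ ω ∈ F, (fun p : A × B => ((Finset.univ.filter (fun ω' => X ω' = p.1)).card : ℝ) *
            ((Finset.univ.filter (fun ω' => Y ω' = p.2)).card : ℝ) /
            ((Finset.univ.filter (fun ω' => P ω' = p)).card : ℝ)) (P ω) from rfl, hcomp]
      -- each global P-fiber of an attained value lies inside F
      have hPfib : ∀ p ∈ F.image P,
          (F.filter (fun ω' => P ω' = p)) = Finset.univ.filter (fun ω' => P ω' = p) := by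
        intro p hp
        obtain ⟨ω₁, hω₁F, rfl⟩ := Finset.mem_image.1 hp
        ext ω'
        simp only [Finset.mem_filter, Finset.mem_univ, true_and]
        constructor
        · rintro ⟨-, h⟩; exact h
        · intro h
          refine ⟨?_, h⟩
          rw [Finset.mem_filter] at hω₁F ⊢
          refine ⟨Finset.mem_univ _, ?_⟩
          have hx : X ω' = X ω₁ := congrArg Prod.fst h
          exact (hXU _ _ hx).trans hω₁F.2
      -- rewrite each summand
      rw [Finset.sum_congr rfl (g := fun p : A × B =>
          ((Finset.univ.filter (fun ω' => X ω' = p.1)).card : ℝ) *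
          ((Finset.univ.filter (fun ω' => Y ω' = p.2)).card : ℝ)) ?_]
      swap
      · intro p hp
        obtain ⟨ω₁, hω₁F, hpe⟩ := Finset.mem_image.1 hp
        have hpos : 0 < ((Finset.univ.filter (fun ω' => P ω' = p)).card : ℝ) := by
          have : ω₁ ∈ Finset.univ.filter (fun ω' => P ω' = p) := by simp [hpe]
          exact_mod_cast Finset.card_pos.2 ⟨ω₁, this⟩
        rw [hPfib p hp, nsmul_eq_mul, mul_comm]
        exact div_mul_cancel₀ _ (ne_of_gt hpos)
      · -- ∑ p in F.image P, cX p.1 * cY p.2 ≤ M * M  via disjoint product sets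
        have hnat : ∑ p ∈ F.image P, ((Finset.univ.filter (fun ω' => X ω' = p.1)).card *
            (Finset.univ.filter (fun ω' => Y ω' = p.2)).card) ≤ F.card * F.card := by
          set T : A × B → Finset (Ω × Ω) := fun p =>
            (Finset.univ.filter (fun ω' => X ω' = p.1)) ×ˢ
              (Finset.univ.filter (fun ω' => Y ω' = p.2)) with hT
          have hdisj : ∀ p ∈ F.image P, ∀ q ∈ F.image P, p ≠ q → Disjoint (T p) (T q) := by
            intro p _ q _ hpq
            rw [Finset.disjoint_left]
            rintro ⟨z1, z2⟩ hzp hzq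
            apply hpq
            simp only [hT, Finset.mem_product, Finset.mem_filter, Finset.mem_univ,
              true_and] at hzp hzq
            ext
            · rw [← hzp.1, ← hzq.1]
            · rw [← hzp.2, ← hzq.2]
          have hsub : (F.image P).biUnion T ⊆ F ×ˢ F := by
            intro z hz
            obtain ⟨p, hp, hzp⟩ := Finset.mem_biUnion.1 hz
            obtain ⟨ω₁, hω₁F, rfl⟩ := Finset.mem_image.1 hp
            simp only [hT, Finset.mem_product, Finset.mem_filter, Finset.mem_univ,
              true_and] at hzp
            rw [Finset.mem_product]
            constructor
            · have : z.1 ∈ fib X ω₁ := by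
                rw [fib, Finset.mem_filter]
                exact ⟨Finset.mem_univ _, hzp.1⟩
              exact hXF ω₁ hω₁F this
            · have : z.2 ∈ fib Y ω₁ := by
                rw [fib, Finset.mem_filter]
                exact ⟨Finset.mem_univ _, hzp.2⟩
              exact hYF ω₁ hω₁F this
          calc ∑ p ∈ F.image P, ((Finset.univ.filter (fun ω' => X ω' = p.1)).card *
              (Finset.univ.filter (fun ω' => Y ω' = p.2)).card)
              = ∑ p ∈ F.image P, (T p).card := by
                apply Finset.sum_congr rfl
                intro p _
                rw [hT, Finset.card_product]
            _ = ((F.image P).biUnion T).card := (Finset.card_biUnion hdisj).symm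
            _ ≤ (F ×ˢ F).card := Finset.card_le_card hsub
            _ = F.card * F.card := Finset.card_product F F
        calc ∑ p ∈ F.image P, (((Finset.univ.filter (fun ω' => X ω' = p.1)).card : ℝ) *
            ((Finset.univ.filter (fun ω' => Y ω' = p.2)).card : ℝ))
            = ((∑ p ∈ F.image P, ((Finset.univ.filter (fun ω' => X ω' = p.1)).card *
              (Finset.univ.filter (fun ω' => Y ω' = p.2)).card) : ℕ) : ℝ) := by
              push_cast; rfl
          _ ≤ ((F.card * F.card : ℕ) : ℝ) := by exact_mod_cast hnat
          _ = M * M := by push_cast [hM]; ring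
    -- Jensen within the fiber F
    have hjensen : ∑ ω ∈ F, M⁻¹ • Real.log (r ω) ≤ Real.log (∑ ω ∈ F, M⁻¹ • r ω) := by
      apply (strictConcaveOn_log_Ioi.concaveOn).le_map_sum
      · intro i _; positivity
      · rw [Finset.sum_const, nsmul_eq_mul]
        field_simp
        exact hM.symm
      · intro i _
        exact Set.mem_Ioi.2 (hrpos i)
    have hsumr : ∑ ω ∈ F, M⁻¹ • r ω ≤ 1 := by
      have h1 : ∑ ω ∈ F, r ω ≤ M := by
        have : ∀ ω ∈ F, r ω = ((((fib X ω).card : ℝ) * ((fib Y ω).card : ℝ)) /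
            ((fib P ω).card : ℝ)) / M := by
          intro ω hω
          show (((fib X ω).card : ℝ) * ((fib Y ω).card : ℝ)) /
              (((fib P ω).card : ℝ) * ((fib U ω).card : ℝ)) = _
          rw [hUF ω hω, ← hM, ← div_div]
        rw [Finset.sum_congr rfl this, ← Finset.sum_div]
        rw [div_le_iff₀ hFne]
        exact hkey
      calc ∑ ω ∈ F, M⁻¹ • r ω = M⁻¹ * ∑ ω ∈ F, r ω := by
            simp only [smul_eq_mul, ← Finset.mul_sum]
        _ ≤ M⁻¹ * M := by
            apply mul_le_mul_of_nonneg_left h1 (by positivity)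
        _ = 1 := inv_mul_cancel₀ (ne_of_gt hFne)
    have hsumrpos : 0 ≤ ∑ ω ∈ F, M⁻¹ • r ω := by
      apply Finset.sum_nonneg
      intro i _
      have := hrpos i
      positivity
    have hlogle : Real.log (∑ ω ∈ F, M⁻¹ • r ω) ≤ 0 := Real.log_nonpos hsumrpos hsumr
    have h2 : M⁻¹ * ∑ ω ∈ F, Real.log (r ω) ≤ 0 := by
      have : ∑ ω ∈ F, M⁻¹ • Real.log (r ω) = M⁻¹ * ∑ ω ∈ F, Real.log (r ω) := by
        simp only [smul_eq_mul, ← Finset.mul_sum]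
      linarith [hjensen.trans hlogle, this]
    -- multiply by M
    have := mul_le_mul_of_nonneg_left h2 (le_of_lt hFne)
    rw [← mul_assoc, mul_inv_cancel₀ (ne_of_gt hFne), one_mul, mul_zero] at this
    exact this
  -- conclude
  have hexp : ∑ ω : Ω, Real.log (r ω) = Sc X + Sc Y - Sc P - Sc U := by
    rw [Finset.sum_congr rfl (fun ω _ => hlog ω)]
    simp only [Sc]
    rw [Finset.sum_sub_distrib, Finset.sum_sub_distrib, Finset.sum_add_distrib]
  rw [hexp] at main
  linarith


abbrev Msg (N1 N2 : ℕ) : Type := (k : Fin (3-1)) → Fin (![N1,N2] k)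

lemma card_msg {N1 N2 : ℕ} : Fintype.card (Msg N1 N2) = N1 * N2 := by
  rw [show Fintype.card (Msg N1 N2) = ∏ k : Fin (3-1), Fintype.card (Fin (![N1,N2] k)) from Fintype.card_pi]
  rw [show (Finset.univ : Finset (Fin (3-1))) = (Finset.univ : Finset (Fin 2)) from rfl]
  rw [Fin.prod_univ_two]
  simp
  exact Or.inl ((Fintype.card_congr' rfl).trans (Fintype.card_fin N1))

lemma fin3_cases (i : Fin 3) : i = 0 ∨ i = 1 ∨ i = 2 := by
  rcases i with ⟨v, hv⟩; simp only [Fin.ext_iff]; omega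

lemma fin2_cases (k : Fin 2) : k = 0 ∨ k = 1 := by
  rcases k with ⟨v, hv⟩; simp only [Fin.ext_iff]; omega

variable {N1 N2 Kd K : ℕ} (C : MLDRCode 3 ![N1, N2] Kd K)

lemma node_det_m0 (i : Fin 3) (m m' : (k : Fin (3-1)) → Fin (![N1,N2] k))
    (h : C.enc i m = C.enc i m') : m 0 = m' 0 := by
  have hfun : (fun i' : ({i} : Finset (Fin 3)) => C.enc i'.1 m)
      = (fun i' : ({i} : Finset (Fin 3)) => C.enc i'.1 m') := by
    funext i'
    have hi' : i'.1 = i := Finset.mem_singleton.1 i'.2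
    rw [hi', h]
  have h1 := C.reconstruct {i} ⟨i, Finset.mem_singleton_self i⟩ (by simp) m 0 (by simp)
  have h2 := C.reconstruct {i} ⟨i, Finset.mem_singleton_self i⟩ (by simp) m' 0 (by simp)
  rw [← h1, ← h2, hfun]

lemma pair_det (i j : Fin 3) (hij : i ≠ j) (m m' : (k : Fin (3-1)) → Fin (![N1,N2] k))
    (hi : C.enc i m = C.enc i m') (hj : C.enc j m = C.enc j m') : m = m' := by
  have hcard : ({i, j} : Finset (Fin 3)).card = 2 := by
    rw [Finset.card_insert_of_notMem (by simp [hij]), Finset.card_singleton]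
  have hfun : (fun i' : ({i, j} : Finset (Fin 3)) => C.enc i'.1 m)
      = (fun i' : ({i, j} : Finset (Fin 3)) => C.enc i'.1 m') := by
    funext i'
    rcases Finset.mem_insert.1 i'.2 with h' | h'
    · rw [h', hi]
    · rw [Finset.mem_singleton.1 h', hj]
  funext k
  have hk : (k : ℕ) < ({i, j} : Finset (Fin 3)).card := by rw [hcard]; exact k.isLt
  have h1 := C.reconstruct {i, j} ⟨i, Finset.mem_insert_self i {j}⟩ (by rw [hcard]) m k hk
  have h2 := C.reconstruct {i, j} ⟨i, Finset.mem_insert_self i {j}⟩ (by rw [hcard]) m' k hk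
  rw [← h1, ← h2, hfun]

lemma rep_det (j : Fin 3) (m m' : (k : Fin (3-1)) → Fin (![N1,N2] k))
    (h : ∀ i : Fin 3, i ≠ j → C.repEnc i j (C.enc i m) = C.repEnc i j (C.enc i m')) :
    C.enc j m = C.enc j m' := by
  rw [← C.repair j m, ← C.repair j m']
  congr 1
  funext i
  exact h i.1 i.2

end MLDRAux

open MLDRAux in
/-- **(n = 3) repair-bandwidth bound.** For any `(3; N₁, N₂, K_d, K)` exact-repair MLD-R
code, `log K ≥ (1/2)·log N₁ + (1/3)·log N₂`. -/
theorem mldr3_beta_bound (N1 N2 Kd K : ℕ) (hN1 : 0 < N1) (hN2 : 0 < N2)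
    (hKd : 0 < Kd) (hK : 0 < K)
    (C : MLDRCode 3 ![N1, N2] Kd K) :
    Real.log K ≥ (1 / 2) * Real.log N1 + (1 / 3) * Real.log N2 := by
  classical
  -- the message space
  set Ω : Type := Msg N1 N2 with hΩ
  have hcard : Fintype.card Ω = N1 * N2 := card_msg
  haveI : Nonempty Ω := by
    apply Fintype.card_pos_iff.mp
    rw [hcard]
    positivity
  -- repair messages
  set s : Fin 3 → Fin 3 → Ω → Fin K := fun i j m => C.repEnc i j (C.enc i m) with hs
  set X : Ω → Fin K × Fin K := fun m => (s 1 0 m, s 2 0 m) with hX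
  set Y : Ω → Fin K × Fin K := fun m => (s 0 1 m, s 2 1 m) with hY
  set Z : Ω → Fin K × Fin K := fun m => (s 0 2 m, s 1 2 m) with hZ
  set U : Ω → Fin (![N1,N2] 0) × Fin K := fun m => (m 0, s 0 1 m) with hU
  set W2 : Ω → Fin Kd := fun m => C.enc 2 m with hW2
  set M0 : Ω → Fin (![N1,N2] 0) := fun m => m 0 with hM0
  -- determination facts
  have hXe0 : ∀ m m' : Ω, X m = X m' → C.enc 0 m = C.enc 0 m' := by
    intro m m' h
    apply rep_det C 0 m m'
    intro i hi
    rcases fin3_cases i with rfl | rfl | rfl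
    · exact absurd rfl hi
    · exact congrArg Prod.fst h
    · exact congrArg Prod.snd h
  have hYe1 : ∀ m m' : Ω, Y m = Y m' → C.enc 1 m = C.enc 1 m' := by
    intro m m' h
    apply rep_det C 1 m m'
    intro i hi
    rcases fin3_cases i with rfl | rfl | rfl
    · exact congrArg Prod.fst h
    · exact absurd rfl hi
    · exact congrArg Prod.snd h
  have hZe2 : ∀ m m' : Ω, Z m = Z m' → C.enc 2 m = C.enc 2 m' := by
    intro m m' h
    apply rep_det C 2 m m'
    intro i hi
    rcases fin3_cases i with rfl | rfl | rfl
    · exact congrArg Prod.fst h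
    · exact congrArg Prod.snd h
    · exact absurd rfl hi
  have hXU : ∀ m m' : Ω, X m = X m' → U m = U m' := by
    intro m m' h
    have he0 := hXe0 m m' h
    have hm0 : m 0 = m' 0 := node_det_m0 C 0 m m' he0
    have hs01 : s 0 1 m = s 0 1 m' := by
      rw [hs]
      simp only
      rw [he0]
    rw [hU]
    simp only
    rw [hm0, hs01]
  have hYU : ∀ m m' : Ω, Y m = Y m' → U m = U m' := by
    intro m m' h
    have he1 := hYe1 m m' h
    have hm0 : m 0 = m' 0 := node_det_m0 C 1 m m' he1
    have hs01 : s 0 1 m = s 0 1 m' := congrArg Prod.fst h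
    rw [hU]; simp only
    rw [hm0, hs01]
  have hXYinj : ∀ m m' : Ω, (X m, Y m) = (X m', Y m') → m = m' := by
    intro m m' h
    exact pair_det C 0 1 (by decide) m m'
      (hXe0 m m' (congrArg Prod.fst h)) (hYe1 m m' (congrArg Prod.snd h))
  have hZW2 : ∀ m m' : Ω, Z m = Z m' → W2 m = W2 m' := fun m m' h => hZe2 m m' h
  have hUM0 : ∀ m m' : Ω, U m = U m' → M0 m = M0 m' := by
    intro m m' h
    exact congrArg Prod.fst h
  have hW2M0 : ∀ m m' : Ω, W2 m = W2 m' → M0 m = M0 m' := by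
    intro m m' h
    exact node_det_m0 C 2 m m' h
  have hUW2inj : ∀ m m' : Ω, (U m, W2 m) = (U m', W2 m') → m = m' := by
    intro m m' h
    have hU' : U m = U m' := congrArg Prod.fst h
    have he2 : C.enc 2 m = C.enc 2 m' := congrArg Prod.snd h
    have hs01 : s 0 1 m = s 0 1 m' := congrArg Prod.snd hU'
    have he1 : C.enc 1 m = C.enc 1 m' := by
      apply rep_det C 1 m m'
      intro i hi
      rcases fin3_cases i with rfl | rfl | rfl
      · exact hs01
      · exact absurd rfl hi
      · show C.repEnc 2 1 (C.enc 2 m) = C.repEnc 2 1 (C.enc 2 m')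
        rw [he2]
    exact pair_det C 1 2 (by decide) m m' he1 he2
  have hM0fib : ∀ m m' : Ω, M0 m = M0 m' → m 1 = m' 1 → m = m' := by
    intro m m' h0 h1
    funext k
    rcases fin2_cases k with rfl | rfl
    · exact h0
    · exact h1
  -- entropy-count inequalities
  have eX := le_Sc (Ω := Ω) X
  have eY := le_Sc (Ω := Ω) Y
  have eZ := le_Sc (Ω := Ω) Z
  have eXY := Sc_submod X Y U hXU hYU
  have eXY0 : Sc (fun m : Ω => (X m, Y m)) = 0 := Sc_eq_zero hXYinj
  have eZW2 : Sc Z ≤ Sc W2 := Sc_mono hZW2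
  have eUW2 := Sc_submod U W2 M0 hUM0 hW2M0
  have eUW20 : Sc (fun m : Ω => (U m, W2 m)) = 0 := Sc_eq_zero hUW2inj
  have eM0 : Sc M0 ≤ (Fintype.card Ω : ℝ) * Real.log (Fintype.card (Fin (![N1,N2] 1))) :=
    Sc_le_card_mul_log (fun m : Ω => m 1) hM0fib
  -- numbers
  set N : ℝ := (Fintype.card Ω : ℝ) with hN
  have hNpos : (0:ℝ) < N := by
    rw [hN, hcard]
    positivity
  have hNval : N = (N1 : ℝ) * (N2 : ℝ) := by rw [hN, hcard]; push_cast; ring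
  have hlogN : Real.log (Fintype.card Ω) = Real.log N1 + Real.log N2 := by
    rw [← hN, hNval]
    rw [Real.log_mul (by positivity) (by positivity)]
  have hcardKK : (Fintype.card (Fin K × Fin K) : ℝ) = (K:ℝ) * (K:ℝ) := by
    simp [Fintype.card_prod]
  have hlogKK : Real.log (Fintype.card (Fin K × Fin K)) = Real.log K + Real.log K := by
    rw [hcardKK, Real.log_mul (by positivity) (by positivity)]
  have hcardN2 : Real.log (Fintype.card (Fin (![N1,N2] 1))) = Real.log N2 := by
    norm_num
  rw [hlogN, hlogKK] at eX eY eZ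
  rw [hcardN2] at eM0
  rw [eXY0] at eXY
  rw [eUW20] at eUW2
  -- chain
  have big : N * (3 * Real.log N1 + 3 * Real.log N2 - 6 * Real.log K) ≤ N * Real.log N2 := by
    nlinarith [eX, eY, eZ, eXY, eZW2, eUW2, eM0]
  have final : 3 * Real.log N1 + 3 * Real.log N2 - 6 * Real.log K ≤ Real.log N2 :=
    le_of_mul_le_mul_left big hNpos
  linarith
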